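/- Let P be the (symmetric) set of P-positions of Blocking-k Wythoff Nim. For every d ∈ ℕ₀, the number of positions (a,b) ∈ P with a ≤ b and b − a = d is at most k. -/

import Mathlib

/-- `q` is a Wythoff Nim option of `p`: a horizontal, vertical or diagonal move. -/
def IsOption (q p : ℕ × ℕ) : Prop :=
  (q.1 < p.1 ∧ q.2 = p.2) ∨ (q.1 = p.1 ∧ q.2 < p.2) ∨
  (q.1 < p.1 ∧ q.2 < p.2 ∧ p.1 - q.1 = p.2 - q.2)

lemma IsOption.sum_lt {q p : ℕ × ℕ} (h : IsOption q p) : q.1 + q.2 < p.1 + p.2 := by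
  rcases h with ⟨h1, h2⟩ | ⟨h1, h2⟩ | ⟨h1, h2, _⟩ <;> omega

/-- A position of Blocking-k Wythoff Nim is a P-position iff strictly fewer than
`k` of its options are P-positions. -/
def IsP (k : ℕ) (p : ℕ × ℕ) : Prop :=
  Set.ncard {q : ℕ × ℕ | ∃ _ : IsOption q p, IsP k q} < k
termination_by p.1 + p.2
decreasing_by exact IsOption.sum_lt ‹_›

lemma isP_iff (k : ℕ) (p : ℕ × ℕ) :
    IsP k p ↔ Set.ncard {q : ℕ × ℕ | ∃ _ : IsOption q p, IsP k q} < k := by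
  rw [IsP]

lemma opt_finite (k : ℕ) (p : ℕ × ℕ) :
    {q : ℕ × ℕ | ∃ _ : IsOption q p, IsP k q}.Finite := by
  apply Set.Finite.subset ((Set.finite_Iic p.1).prod (Set.finite_Iic p.2))
  rintro q ⟨hq, _⟩
  rcases hq with ⟨h1, h2⟩ | ⟨h1, h2⟩ | ⟨h1, h2, _⟩ <;>
    exact ⟨by simp; omega, by simp; omega⟩

/-- For every d, at most k P-positions (a,b) of Blocking-k Wythoff Nim with a ≤ b
satisfy b − a = d. -/
theorem blocking_wythoff_diag_bound (k : ℕ) (hk : 0 < k) (d : ℕ) :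
    {p : ℕ × ℕ | IsP k p ∧ p.1 ≤ p.2 ∧ p.2 - p.1 = d}.ncard ≤ k := by
  set T : Set (ℕ × ℕ) := {p : ℕ × ℕ | IsP k p ∧ p.1 ≤ p.2 ∧ p.2 - p.1 = d} with hT
  by_contra h
  push_neg at h
  have hTfin : T.Finite := by
    by_contra hinf
    rw [Set.Infinite.ncard (by exact hinf)] at h
    omega
  have hne : T.Nonempty := by
    rw [← Set.ncard_pos hTfin]; omega
  obtain ⟨p, hp, hmax⟩ := Set.exists_max_image T (fun p => p.1) hTfin hne
  obtain ⟨hpP, hple, hpd⟩ := hp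
  have hsub : T \ {p} ⊆ {q : ℕ × ℕ | ∃ _ : IsOption q p, IsP k q} := by
    rintro q ⟨⟨hqP, hqle, hqd⟩, hqne⟩
    have hq1 : q.1 < p.1 := by
      rcases lt_or_eq_of_le (hmax q ⟨hqP, hqle, hqd⟩) with h1 | h1
      · exact h1
      · exfalso; apply hqne
        have : q.2 = p.2 := by omega
        exact Prod.ext h1 this
    refine ⟨Or.inr (Or.inr ⟨hq1, by omega, by omega⟩), hqP⟩
  have h1 : (T \ {p}).ncard ≤ {q : ℕ × ℕ | ∃ _ : IsOption q p, IsP k q}.ncard :=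
    Set.ncard_le_ncard hsub (opt_finite k p)
  have h2 : (T \ {p}).ncard = T.ncard - 1 :=
    Set.ncard_diff_singleton_of_mem (show p ∈ T from ⟨hpP, hple, hpd⟩)
  have h3 := (isP_iff k p).mp hpP
  omega
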